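/- arXiv:1808.00710 — 4 statements merged into one kernel-verified Lean document; each statement's English description precedes it below -/
import Mathlib

section
/- For first-order formulas ψ₁, ψ₂ in Team Semantics and a variable v occurring free in ψ₁ but not occurring in ψ₂, the formulas (∃v ψ₁) ∨ ψ₂ and ∃v (ψ₁ ∨ ψ₂) are logically equivalent: for all models M and teams X with suitable domain, M ⊨_X (∃v ψ₁) ∨ ψ₂ iff M ⊨_X ∃v (ψ₁ ∨ ψ₂). -/
/-- A relational first-order signature. -/
structure Signature where
  RelSym : Type
  arity : RelSym → ℕ

/-- First-order formulas in negation normal form over signature `σ` and variables `V`. -/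
inductive Formula (σ : Signature) (V : Type) : Type
  | rel (r : σ.RelSym) (ts : Fin (σ.arity r) → V)
  | nrel (r : σ.RelSym) (ts : Fin (σ.arity r) → V)
  | eq (v w : V)
  | neq (v w : V)
  | and (φ ψ : Formula σ V)
  | or (φ ψ : Formula σ V)
  | ex (v : V) (φ : Formula σ V)
  | all (v : V) (φ : Formula σ V)

/-- A first-order structure with domain `M`. -/
structure Struc (σ : Signature) (M : Type) where
  interp : ∀ r : σ.RelSym, (Fin (σ.arity r) → M) → Prop

/-- Free variables of a formula. -/
def Formula.freeVars {σ : Signature} {V : Type} : Formula σ V → Set V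
  | .rel _ ts => Set.range ts
  | .nrel _ ts => Set.range ts
  | .eq v w => {v, w}
  | .neq v w => {v, w}
  | .and φ ψ => φ.freeVars ∪ ψ.freeVars
  | .or φ ψ => φ.freeVars ∪ ψ.freeVars
  | .ex v φ => φ.freeVars \ {v}
  | .all v φ => φ.freeVars \ {v}

/-- All variables (free or bound) occurring in a formula. -/
def Formula.vars {σ : Signature} {V : Type} : Formula σ V → Set V
  | .rel _ ts => Set.range ts
  | .nrel _ ts => Set.range ts
  | .eq v w => {v, w}
  | .neq v w => {v, w}
  | .and φ ψ => φ.vars ∪ ψ.vars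
  | .or φ ψ => φ.vars ∪ ψ.vars
  | .ex v φ => insert v φ.vars
  | .all v φ => insert v φ.vars

/-- Tarskian satisfaction of a formula by a single assignment. -/
def Tarski {σ : Signature} {V M : Type} [DecidableEq V] (𝕄 : Struc σ M) :
    Formula σ V → (V → M) → Prop
  | .rel r ts, s => 𝕄.interp r (fun i => s (ts i))
  | .nrel r ts, s => ¬ 𝕄.interp r (fun i => s (ts i))
  | .eq v w, s => s v = s w
  | .neq v w, s => s v ≠ s w
  | .and φ ψ, s => Tarski 𝕄 φ s ∧ Tarski 𝕄 ψ s
  | .or φ ψ, s => Tarski 𝕄 φ s ∨ Tarski 𝕄 ψ s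
  | .ex v φ, s => ∃ m : M, Tarski 𝕄 φ (Function.update s v m)
  | .all v φ, s => ∀ m : M, Tarski 𝕄 φ (Function.update s v m)

/-- Supplementation `X[H/v]` of a team. -/
def supplement {V M : Type} [DecidableEq V] (X : Set (V → M))
    (H : (V → M) → Set M) (v : V) : Set (V → M) :=
  {t | ∃ s ∈ X, ∃ m ∈ H s, t = Function.update s v m}

/-- Duplication `X[M/v]` of a team. -/
def duplicate {V M : Type} [DecidableEq V] (X : Set (V → M)) (v : V) : Set (V → M) :=
  {t | ∃ s ∈ X, ∃ m : M, t = Function.update s v m}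

/-- Team Semantics satisfaction. -/
def TeamSat {σ : Signature} {V M : Type} [DecidableEq V] (𝕄 : Struc σ M) :
    Formula σ V → Set (V → M) → Prop
  | .rel r ts, X => ∀ s ∈ X, 𝕄.interp r (fun i => s (ts i))
  | .nrel r ts, X => ∀ s ∈ X, ¬ 𝕄.interp r (fun i => s (ts i))
  | .eq v w, X => ∀ s ∈ X, s v = s w
  | .neq v w, X => ∀ s ∈ X, s v ≠ s w
  | .and φ ψ, X => TeamSat 𝕄 φ X ∧ TeamSat 𝕄 ψ X
  | .or φ ψ, X => ∃ Y Z, X = Y ∪ Z ∧ TeamSat 𝕄 φ Y ∧ TeamSat 𝕄 ψ Z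
  | .ex v φ, X => ∃ H : (V → M) → Set M,
      (∀ s ∈ X, (H s).Nonempty) ∧ TeamSat 𝕄 φ (supplement X H v)
  | .all v φ, X => TeamSat 𝕄 φ (duplicate X v)

section Aux

variable {σ : Signature} {V M : Type} [DecidableEq V]

/-- Projection of an assignment away from the variable `v`. -/
def projAux (v : V) (s : V → M) : {w : V // w ≠ v} → M := fun w => s w.1

lemma projAux_eq_iff {v : V} {s t : V → M} :
    projAux (M := M) v s = projAux v t ↔ ∀ w, w ≠ v → s w = t w := by
  constructor
  · intro h w hw; exact congrFun h ⟨w, hw⟩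
  · intro h; funext w; exact h w.1 w.2

lemma projAux_update (v : V) (s : V → M) (m : M) :
    projAux (M := M) v (Function.update s v m) = projAux v s := by
  funext w; simp [projAux, Function.update_of_ne w.2]

lemma projAux_update_congr {v : V} {s t : V → M} (h : projAux (M := M) v s = projAux v t)
    (u : V) (m : M) :
    projAux (M := M) v (Function.update s u m) = projAux v (Function.update t u m) := by
  rw [projAux_eq_iff] at h ⊢
  intro w hw
  by_cases hwu : w = u
  · subst hwu; simp
  · rw [Function.update_of_ne hwu, Function.update_of_ne hwu, h w hw]

/-- Downward closure of team satisfaction. -/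
lemma teamSat_mono (𝕄 : Struc σ M) :
    ∀ (ψ : Formula σ V) (X Y : Set (V → M)), X ⊆ Y → TeamSat 𝕄 ψ Y → TeamSat 𝕄 ψ X
  | .rel _ _, _, _, hXY, h => fun s hs => h s (hXY hs)
  | .nrel _ _, _, _, hXY, h => fun s hs => h s (hXY hs)
  | .eq _ _, _, _, hXY, h => fun s hs => h s (hXY hs)
  | .neq _ _, _, _, hXY, h => fun s hs => h s (hXY hs)
  | .and φ ψ, X, Y, hXY, h =>
      ⟨teamSat_mono 𝕄 φ X Y hXY h.1, teamSat_mono 𝕄 ψ X Y hXY h.2⟩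
  | .or φ ψ, X, Y, hXY, h => by
      obtain ⟨Y₁, Y₂, rfl, h1, h2⟩ := h
      refine ⟨X ∩ Y₁, X ∩ Y₂, ?_,
        teamSat_mono 𝕄 φ _ _ Set.inter_subset_right h1,
        teamSat_mono 𝕄 ψ _ _ Set.inter_subset_right h2⟩
      ext s
      constructor
      · intro hs
        rcases hXY hs with h' | h'
        · exact Or.inl ⟨hs, h'⟩
        · exact Or.inr ⟨hs, h'⟩
      · rintro (⟨hs, _⟩ | ⟨hs, _⟩) <;> exact hs
  | .ex u φ, X, Y, hXY, h => by
      obtain ⟨H, hne, hsat⟩ := h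
      refine ⟨H, fun s hs => hne s (hXY hs), teamSat_mono 𝕄 φ _ _ ?_ hsat⟩
      rintro t ⟨s, hs, m, hm, rfl⟩
      exact ⟨s, hXY hs, m, hm, rfl⟩
  | .all u φ, X, Y, hXY, h => by
      refine teamSat_mono 𝕄 φ _ _ ?_ h
      rintro t ⟨s, hs, m, rfl⟩
      exact ⟨s, hXY hs, m, rfl⟩

/-- Locality: a variable not occurring in `ψ` is irrelevant to satisfaction. -/
lemma teamSat_local (𝕄 : Struc σ M) (v : V) :
    ∀ (ψ : Formula σ V), v ∉ ψ.vars → ∀ X Y : Set (V → M),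
      projAux v '' X = projAux v '' Y → TeamSat 𝕄 ψ X → TeamSat 𝕄 ψ Y
  | .rel r ts, hv, X, Y, hXY, h => by
      intro t ht
      obtain ⟨s, hs, hst⟩ : ∃ s ∈ X, projAux v s = projAux v t := by
        have : projAux (M := M) v t ∈ projAux v '' X := hXY ▸ ⟨t, ht, rfl⟩
        obtain ⟨s, hs, hst⟩ := this; exact ⟨s, hs, hst⟩
      have : (fun i => t (ts i)) = fun i => s (ts i) := by
        funext i
        exact ((projAux_eq_iff.1 hst) (ts i) (fun he => hv (he ▸ ⟨i, rfl⟩))).symm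
      rw [this]; exact h s hs
  | .nrel r ts, hv, X, Y, hXY, h => by
      intro t ht
      obtain ⟨s, hs, hst⟩ : ∃ s ∈ X, projAux v s = projAux v t := by
        have : projAux (M := M) v t ∈ projAux v '' X := hXY ▸ ⟨t, ht, rfl⟩
        obtain ⟨s, hs, hst⟩ := this; exact ⟨s, hs, hst⟩
      have : (fun i => t (ts i)) = fun i => s (ts i) := by
        funext i
        exact ((projAux_eq_iff.1 hst) (ts i) (fun he => hv (he ▸ ⟨i, rfl⟩))).symm
      rw [this]; exact h s hs
  | .eq a b, hv, X, Y, hXY, h => by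
      intro t ht
      obtain ⟨s, hs, hst⟩ : ∃ s ∈ X, projAux v s = projAux v t := by
        have : projAux (M := M) v t ∈ projAux v '' X := hXY ▸ ⟨t, ht, rfl⟩
        obtain ⟨s, hs, hst⟩ := this; exact ⟨s, hs, hst⟩
      have ha : a ≠ v := fun he => hv (by simp [Formula.vars, he])
      have hb : b ≠ v := fun he => hv (by simp [Formula.vars, he])
      rw [← (projAux_eq_iff.1 hst) a ha, ← (projAux_eq_iff.1 hst) b hb]
      exact h s hs
  | .neq a b, hv, X, Y, hXY, h => by
      intro t ht
      obtain ⟨s, hs, hst⟩ : ∃ s ∈ X, projAux v s = projAux v t := by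
        have : projAux (M := M) v t ∈ projAux v '' X := hXY ▸ ⟨t, ht, rfl⟩
        obtain ⟨s, hs, hst⟩ := this; exact ⟨s, hs, hst⟩
      have ha : a ≠ v := fun he => hv (by simp [Formula.vars, he])
      have hb : b ≠ v := fun he => hv (by simp [Formula.vars, he])
      rw [← (projAux_eq_iff.1 hst) a ha, ← (projAux_eq_iff.1 hst) b hb]
      exact h s hs
  | .and φ ψ, hv, X, Y, hXY, h => by
      have hφ : v ∉ φ.vars := fun h' => hv (Or.inl h')
      have hψ : v ∉ ψ.vars := fun h' => hv (Or.inr h')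
      exact ⟨teamSat_local 𝕄 v φ hφ X Y hXY h.1, teamSat_local 𝕄 v ψ hψ X Y hXY h.2⟩
  | .or φ ψ, hv, X, Y, hXY, h => by
      have hφ : v ∉ φ.vars := fun h' => hv (Or.inl h')
      have hψ : v ∉ ψ.vars := fun h' => hv (Or.inr h')
      obtain ⟨X₁, X₂, rfl, h1, h2⟩ := h
      refine ⟨{t ∈ Y | projAux v t ∈ projAux v '' X₁},
              {t ∈ Y | projAux v t ∈ projAux v '' X₂}, ?_, ?_, ?_⟩
      · ext t
        constructor
        · intro ht
          have : projAux (M := M) v t ∈ projAux v '' (X₁ ∪ X₂) := hXY ▸ ⟨t, ht, rfl⟩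
          obtain ⟨s, hs | hs, hst⟩ := this
          · exact Or.inl ⟨ht, s, hs, hst⟩
          · exact Or.inr ⟨ht, s, hs, hst⟩
        · rintro (⟨ht, _⟩ | ⟨ht, _⟩) <;> exact ht
      · refine teamSat_local 𝕄 v φ hφ X₁ _ ?_ h1
        ext p
        constructor
        · rintro ⟨s, hs, rfl⟩
          have : projAux (M := M) v s ∈ projAux v '' Y := hXY ▸ ⟨s, Or.inl hs, rfl⟩
          obtain ⟨t, ht, hts⟩ := this
          exact ⟨t, ⟨ht, hts ▸ ⟨s, hs, rfl⟩⟩, hts⟩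
        · rintro ⟨t, ⟨_, hmem⟩, rfl⟩
          exact hmem
      · refine teamSat_local 𝕄 v ψ hψ X₂ _ ?_ h2
        ext p
        constructor
        · rintro ⟨s, hs, rfl⟩
          have : projAux (M := M) v s ∈ projAux v '' Y := hXY ▸ ⟨s, Or.inr hs, rfl⟩
          obtain ⟨t, ht, hts⟩ := this
          exact ⟨t, ⟨ht, hts ▸ ⟨s, hs, rfl⟩⟩, hts⟩
        · rintro ⟨t, ⟨_, hmem⟩, rfl⟩
          exact hmem
  | .ex u φ, hv, X, Y, hXY, h => by
      have hφ : v ∉ φ.vars := fun h' => hv (Set.mem_insert_iff.2 (Or.inr h'))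
      obtain ⟨H, hne, hsat⟩ := h
      refine ⟨fun t => {m | ∃ s ∈ X, projAux v s = projAux v t ∧ m ∈ H s}, ?_, ?_⟩
      · intro t ht
        have : projAux (M := M) v t ∈ projAux v '' X := hXY ▸ ⟨t, ht, rfl⟩
        obtain ⟨s, hs, hst⟩ := this
        obtain ⟨m, hm⟩ := hne s hs
        exact ⟨m, s, hs, hst, hm⟩
      · refine teamSat_local 𝕄 v φ hφ _ _ ?_ hsat
        ext p
        constructor
        · rintro ⟨q, ⟨s, hs, m, hm, rfl⟩, rfl⟩
          have : projAux (M := M) v s ∈ projAux v '' Y := hXY ▸ ⟨s, hs, rfl⟩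
          obtain ⟨t, ht, hts⟩ := this
          exact ⟨Function.update t u m, ⟨t, ht, m, ⟨s, hs, hts.symm, hm⟩, rfl⟩,
            projAux_update_congr hts u m⟩
        · rintro ⟨q, ⟨t, ht, m, ⟨s, hs, hst, hm⟩, rfl⟩, rfl⟩
          exact ⟨Function.update s u m, ⟨s, hs, m, hm, rfl⟩,
            projAux_update_congr hst u m⟩
  | .all u φ, hv, X, Y, hXY, h => by
      have hφ : v ∉ φ.vars := fun h' => hv (Set.mem_insert_iff.2 (Or.inr h'))
      refine teamSat_local 𝕄 v φ hφ _ _ ?_ h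
      ext p
      constructor
      · rintro ⟨q, ⟨s, hs, m, rfl⟩, rfl⟩
        have : projAux (M := M) v s ∈ projAux v '' Y := hXY ▸ ⟨s, hs, rfl⟩
        obtain ⟨t, ht, hts⟩ := this
        exact ⟨Function.update t u m, ⟨t, ht, m, rfl⟩, projAux_update_congr hts u m⟩
      · rintro ⟨q, ⟨t, ht, m, rfl⟩, rfl⟩
        have : projAux (M := M) v t ∈ projAux v '' X := hXY.symm ▸ ⟨t, ht, rfl⟩
        obtain ⟨s, hs, hst⟩ := this
        exact ⟨Function.update s u m, ⟨s, hs, m, rfl⟩, projAux_update_congr hst u m⟩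

end Aux

/-- `(∃v ψ₁) ∨ ψ₂ ≡ ∃v (ψ₁ ∨ ψ₂)` when `v` is free in `ψ₁`
and does not occur in `ψ₂`. -/
theorem ex_or_pull {σ : Signature} {V M : Type} [DecidableEq V]
    (𝕄 : Struc σ M) (ψ₁ ψ₂ : Formula σ V) (v : V)
    (hv1 : v ∈ ψ₁.freeVars) (hv2 : v ∉ ψ₂.vars) (X : Set (V → M)) :
    TeamSat 𝕄 ((ψ₁.ex v).or ψ₂) X ↔ TeamSat 𝕄 ((ψ₁.or ψ₂).ex v) X := by
  constructor
  · rintro ⟨Y, Z, rfl, ⟨H, hne, hYsat⟩, hZ⟩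
    refine ⟨fun s => {m | (s ∈ Y ∧ m ∈ H s) ∨ (s ∈ Z ∧ m = s v)}, ?_, ?_⟩
    · rintro s (hs | hs)
      · obtain ⟨m, hm⟩ := hne s hs
        exact ⟨m, Or.inl ⟨hs, hm⟩⟩
      · exact ⟨s v, Or.inr ⟨hs, rfl⟩⟩
    · refine ⟨supplement Y H v, Z, ?_, hYsat, hZ⟩
      ext t
      constructor
      · rintro ⟨s, hs, m, hm | ⟨hsZ, rfl⟩, rfl⟩
        · exact Or.inl ⟨s, hm.1, m, hm.2, rfl⟩
        · right; rwa [Function.update_eq_self]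
      · rintro (⟨s, hs, m, hm, rfl⟩ | ht)
        · exact ⟨s, Or.inl hs, m, Or.inl ⟨hs, hm⟩, rfl⟩
        · exact ⟨t, Or.inr ht, t v, Or.inr ⟨ht, rfl⟩, (Function.update_eq_self v t).symm⟩
  · rintro ⟨H, hne, Y, Z, hsplit, h1, h2⟩
    refine ⟨{s ∈ X | ∃ m ∈ H s, Function.update s v m ∈ Y},
            {s ∈ X | ∃ m ∈ H s, Function.update s v m ∈ Z}, ?_, ?_, ?_⟩
    · ext s
      constructor
      · intro hs
        obtain ⟨m, hm⟩ := hne s hs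
        have : Function.update s v m ∈ Y ∪ Z := hsplit ▸ ⟨s, hs, m, hm, rfl⟩
        rcases this with h | h
        · exact Or.inl ⟨hs, m, hm, h⟩
        · exact Or.inr ⟨hs, m, hm, h⟩
      · rintro (⟨hs, _⟩ | ⟨hs, _⟩) <;> exact hs
    · refine ⟨fun s => {m ∈ H s | Function.update s v m ∈ Y}, ?_, ?_⟩
      · rintro s ⟨_, m, hm, hY⟩
        exact ⟨m, hm, hY⟩
      · refine teamSat_mono 𝕄 ψ₁ _ Y ?_ h1
        rintro t ⟨s, _, m, ⟨_, hY⟩, rfl⟩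
        exact hY
    · refine teamSat_local 𝕄 v ψ₂ hv2 Z _ ?_ h2
      ext p
      constructor
      · rintro ⟨t, htZ, rfl⟩
        have : t ∈ supplement X H v := hsplit.symm ▸ Or.inr htZ
        obtain ⟨s, hs, m, hm, rfl⟩ := this
        exact ⟨s, ⟨hs, m, hm, htZ⟩, (projAux_update v s m).symm⟩
      · rintro ⟨s, ⟨hsX, m, hm, hZ⟩, rfl⟩
        exact ⟨Function.update s v m, hZ, projAux_update v s m⟩
end

section
/- Over models with at least two elements, for any Team Semantics formulas ψ₁ and ψ₂ and fresh variables q₁, q₂ not occurring in ψ₁ or ψ₂, the formula ψ₁ ∨ ψ₂ is logically equivalent to ∃q₁ ∃q₂ ((q₁ = q₂ ↪ ψ₁) ∧ (q₁ ≠ q₂ ↪ ψ₂)), where θ ↪ φ abbreviates (¬θ) ∨ (θ ∧ φ) for first-order θ. -/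
/-- A (generalized) dependency: an arity together with, for each domain,
a property of relations of that arity (the class of relations satisfying it). -/
structure Dep where
  ar : ℕ
  sem : (M : Type) → Set (Fin ar → M) → Prop

/-- Formulas of `FO(𝒟)`: first-order formulas in NNF possibly containing
dependency atoms `D t̄`. -/
inductive TForm (σ : Signature) (V : Type) : Type 1
  | rel (r : σ.RelSym) (ts : Fin (σ.arity r) → V)
  | nrel (r : σ.RelSym) (ts : Fin (σ.arity r) → V)
  | eq (v w : V)
  | neq (v w : V)
  | and (φ ψ : TForm σ V)
  | or (φ ψ : TForm σ V)
  | ex (v : V) (φ : TForm σ V)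
  | all (v : V) (φ : TForm σ V)
  | dep (d : Dep) (ts : Fin d.ar → V)

/-- All variables occurring in a `TForm`. -/
def TForm.vars {σ : Signature} {V : Type} : TForm σ V → Set V
  | .rel _ ts => Set.range ts
  | .nrel _ ts => Set.range ts
  | .eq v w => {v, w}
  | .neq v w => {v, w}
  | .and φ ψ => φ.vars ∪ ψ.vars
  | .or φ ψ => φ.vars ∪ ψ.vars
  | .ex v φ => insert v φ.vars
  | .all v φ => insert v φ.vars
  | .dep _ ts => Set.range ts

/-- Team Semantics for formulas with dependency atoms.  The dependency atom
`D t̄` holds in `X` iff the relation `X(t̄)` satisfies `D`. -/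
def TTeamSat {σ : Signature} {V M : Type} [DecidableEq V] (𝕄 : Struc σ M) :
    TForm σ V → Set (V → M) → Prop
  | .rel r ts, X => ∀ s ∈ X, 𝕄.interp r (fun i => s (ts i))
  | .nrel r ts, X => ∀ s ∈ X, ¬ 𝕄.interp r (fun i => s (ts i))
  | .eq v w, X => ∀ s ∈ X, s v = s w
  | .neq v w, X => ∀ s ∈ X, s v ≠ s w
  | .and φ ψ, X => TTeamSat 𝕄 φ X ∧ TTeamSat 𝕄 ψ X
  | .or φ ψ, X => ∃ Y Z, X = Y ∪ Z ∧ TTeamSat 𝕄 φ Y ∧ TTeamSat 𝕄 ψ Z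
  | .ex v φ, X => ∃ H : (V → M) → Set M,
      (∀ s ∈ X, (H s).Nonempty) ∧ TTeamSat 𝕄 φ (supplement X H v)
  | .all v φ, X => TTeamSat 𝕄 φ (duplicate X v)
  | .dep d ts, X => d.sem M ((fun s => fun i => s (ts i)) '' X)

/-- The NNF negation of a first-order formula. -/
def Formula.neg {σ : Signature} {V : Type} : Formula σ V → Formula σ V
  | .rel r ts => .nrel r ts
  | .nrel r ts => .rel r ts
  | .eq v w => .neq v w
  | .neq v w => .eq v w
  | .and φ ψ => .or φ.neg ψ.neg
  | .or φ ψ => .and φ.neg ψ.neg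
  | .ex v φ => .all v φ.neg
  | .all v φ => .ex v φ.neg

/-- Embedding of first-order formulas into formulas with dependency atoms. -/
def Formula.toT {σ : Signature} {V : Type} : Formula σ V → TForm σ V
  | .rel r ts => .rel r ts
  | .nrel r ts => .nrel r ts
  | .eq v w => .eq v w
  | .neq v w => .neq v w
  | .and φ ψ => .and φ.toT ψ.toT
  | .or φ ψ => .or φ.toT ψ.toT
  | .ex v φ => .ex v φ.toT
  | .all v φ => .all v φ.toT

/-- The connective `θ ↪ φ`, defined as `(¬θ) ∨ (θ ∧ φ)`. -/
def hook {σ : Signature} {V : Type} (θ : Formula σ V) (φ : TForm σ V) : TForm σ V :=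
  .or θ.neg.toT (.and θ.toT φ)

/-- The restriction `X ↾ θ` of a team to the assignments Tarski-satisfying `θ`. -/
def restrTeam {σ : Signature} {V M : Type} [DecidableEq V] (𝕄 : Struc σ M)
    (X : Set (V → M)) (θ : Formula σ V) : Set (V → M) :=
  {s ∈ X | Tarski 𝕄 θ s}

section Aux

variable {σ : Signature} {V M : Type} [DecidableEq V]

/-- Two assignments agree off a set `Q` of variables. -/
def agreeOff (Q : Set V) (s t : V → M) : Prop := ∀ v ∉ Q, s v = t v

theorem agreeOff.symm {Q : Set V} {s t : V → M} (h : agreeOff Q s t) : agreeOff Q t s :=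
  fun v hv => (h v hv).symm

/-- Two teams are equivalent modulo `Q`: each assignment of one has a
`Q`-variant in the other. -/
def TeamEquiv (Q : Set V) (X Y : Set (V → M)) : Prop :=
  (∀ s ∈ X, ∃ t ∈ Y, agreeOff Q s t) ∧ (∀ t ∈ Y, ∃ s ∈ X, agreeOff Q s t)

theorem TeamEquiv.symm {Q : Set V} {X Y : Set (V → M)} (h : TeamEquiv Q X Y) :
    TeamEquiv Q Y X :=
  ⟨fun t ht => (h.2 t ht).imp fun s hs => ⟨hs.1, hs.2.symm⟩,
   fun s hs => (h.1 s hs).imp fun t ht => ⟨ht.1, ht.2.symm⟩⟩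

/-- Locality: team satisfaction only depends on the team modulo variables
not occurring in the formula. -/
theorem locality (𝕄 : Struc σ M) (Q : Set V) :
    ∀ (φ : TForm σ V), Disjoint φ.vars Q → ∀ X Y : Set (V → M),
      TeamEquiv Q X Y → TTeamSat 𝕄 φ X → TTeamSat 𝕄 φ Y := by
  intro φ
  induction φ with
  | rel r ts =>
    intro hd X Y hE hsat t ht
    obtain ⟨s, hs, hag⟩ := hE.2 t ht
    have h : (fun i => t (ts i)) = fun i => s (ts i) := by
      funext i
      exact (hag (ts i) (Set.disjoint_left.mp hd (Set.mem_range_self i))).symm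
    rw [show 𝕄.interp r (fun i => t (ts i)) = 𝕄.interp r (fun i => s (ts i)) from by rw [h]]
    exact hsat s hs
  | nrel r ts =>
    intro hd X Y hE hsat t ht
    obtain ⟨s, hs, hag⟩ := hE.2 t ht
    have h : (fun i => t (ts i)) = fun i => s (ts i) := by
      funext i
      exact (hag (ts i) (Set.disjoint_left.mp hd (Set.mem_range_self i))).symm
    rw [show 𝕄.interp r (fun i => t (ts i)) = 𝕄.interp r (fun i => s (ts i)) from by rw [h]]
    exact hsat s hs
  | eq v w =>
    intro hd X Y hE hsat t ht
    obtain ⟨s, hs, hag⟩ := hE.2 t ht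
    have hv := hag v (Set.disjoint_left.mp hd (by simp [TForm.vars]))
    have hw := hag w (Set.disjoint_left.mp hd (by simp [TForm.vars]))
    rw [← hv, ← hw]; exact hsat s hs
  | neq v w =>
    intro hd X Y hE hsat t ht
    obtain ⟨s, hs, hag⟩ := hE.2 t ht
    have hv := hag v (Set.disjoint_left.mp hd (by simp [TForm.vars]))
    have hw := hag w (Set.disjoint_left.mp hd (by simp [TForm.vars]))
    rw [← hv, ← hw]; exact hsat s hs
  | and φ ψ ihφ ihψ =>
    intro hd X Y hE hsat
    have hdφ : Disjoint φ.vars Q := (Set.disjoint_union_left.mp hd).1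
    have hdψ : Disjoint ψ.vars Q := (Set.disjoint_union_left.mp hd).2
    exact ⟨ihφ hdφ X Y hE hsat.1, ihψ hdψ X Y hE hsat.2⟩
  | or φ ψ ihφ ihψ =>
    intro hd X Y hE hsat
    obtain ⟨X₁, X₂, hX, h1, h2⟩ := hsat
    have hdφ : Disjoint φ.vars Q := (Set.disjoint_union_left.mp hd).1
    have hdψ : Disjoint ψ.vars Q := (Set.disjoint_union_left.mp hd).2
    refine ⟨{t ∈ Y | ∃ s ∈ X₁, agreeOff Q s t}, {t ∈ Y | ∃ s ∈ X₂, agreeOff Q s t}, ?_, ?_, ?_⟩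
    · ext t
      constructor
      · intro ht
        obtain ⟨s, hs, hag⟩ := hE.2 t ht
        rcases hX ▸ hs with hs1 | hs2
        · exact Or.inl ⟨ht, s, hs1, hag⟩
        · exact Or.inr ⟨ht, s, hs2, hag⟩
      · rintro (⟨ht, _⟩ | ⟨ht, _⟩) <;> exact ht
    · refine ihφ hdφ X₁ _ ⟨?_, ?_⟩ h1
      · intro s hs
        obtain ⟨t, ht, hag⟩ := hE.1 s (hX ▸ Set.mem_union_left _ hs)
        exact ⟨t, ⟨ht, s, hs, hag⟩, hag⟩
      · rintro t ⟨_, s, hs, hag⟩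
        exact ⟨s, hs, hag⟩
    · refine ihψ hdψ X₂ _ ⟨?_, ?_⟩ h2
      · intro s hs
        obtain ⟨t, ht, hag⟩ := hE.1 s (hX ▸ Set.mem_union_right _ hs)
        exact ⟨t, ⟨ht, s, hs, hag⟩, hag⟩
      · rintro t ⟨_, s, hs, hag⟩
        exact ⟨s, hs, hag⟩
  | ex v φ ih =>
    intro hd X Y hE hsat
    have hv : v ∉ Q := Set.disjoint_left.mp hd (Set.mem_insert _ _)
    have hdφ : Disjoint φ.vars Q :=
      hd.mono_left (Set.subset_insert _ _)
    obtain ⟨H, hne, hsat⟩ := hsat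
    refine ⟨fun t => {m | ∃ s ∈ X, agreeOff Q s t ∧ m ∈ H s}, ?_, ?_⟩
    · intro t ht
      obtain ⟨s, hs, hag⟩ := hE.2 t ht
      obtain ⟨m, hm⟩ := hne s hs
      exact ⟨m, s, hs, hag, hm⟩
    · refine ih hdφ _ _ ⟨?_, ?_⟩ hsat
      · rintro u ⟨s, hs, m, hm, rfl⟩
        obtain ⟨t, ht, hag⟩ := hE.1 s hs
        refine ⟨Function.update t v m, ⟨t, ht, m, ⟨s, hs, hag, hm⟩, rfl⟩, ?_⟩
        intro w hw
        by_cases hwv : w = v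
        · subst hwv; simp
        · simp [Function.update_of_ne hwv]; exact hag w hw
      · rintro u ⟨t, ht, m, ⟨s, hs, hag, hm⟩, rfl⟩
        refine ⟨Function.update s v m, ⟨s, hs, m, hm, rfl⟩, ?_⟩
        intro w hw
        by_cases hwv : w = v
        · subst hwv; simp
        · simp [Function.update_of_ne hwv]; exact hag w hw
  | all v φ ih =>
    intro hd X Y hE hsat
    have hdφ : Disjoint φ.vars Q := hd.mono_left (Set.subset_insert _ _)
    refine ih hdφ _ _ ⟨?_, ?_⟩ hsat
    · rintro u ⟨s, hs, m, rfl⟩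
      obtain ⟨t, ht, hag⟩ := hE.1 s hs
      refine ⟨Function.update t v m, ⟨t, ht, m, rfl⟩, ?_⟩
      intro w hw
      by_cases hwv : w = v
      · subst hwv; simp
      · simp [Function.update_of_ne hwv]; exact hag w hw
    · rintro u ⟨t, ht, m, rfl⟩
      obtain ⟨s, hs, hag⟩ := hE.2 t ht
      refine ⟨Function.update s v m, ⟨s, hs, m, rfl⟩, ?_⟩
      intro w hw
      by_cases hwv : w = v
      · subst hwv; simp
      · simp [Function.update_of_ne hwv]; exact hag w hw
  | dep d ts =>
    intro hd X Y hE hsat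
    have himg : (fun s => fun i => s (ts i)) '' X = (fun s => fun i => s (ts i)) '' Y := by
      apply Set.Subset.antisymm
      · rintro _ ⟨s, hs, rfl⟩
        obtain ⟨t, ht, hag⟩ := hE.1 s hs
        refine ⟨t, ht, ?_⟩
        funext i
        exact (hag (ts i) (Set.disjoint_left.mp hd (Set.mem_range_self i))).symm
      · rintro _ ⟨t, ht, rfl⟩
        obtain ⟨s, hs, hag⟩ := hE.2 t ht
        refine ⟨s, hs, ?_⟩
        funext i
        exact hag (ts i) (Set.disjoint_left.mp hd (Set.mem_range_self i))
    show d.sem M ((fun s => fun i => s (ts i)) '' Y)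
    rw [← himg]
    exact hsat

/-- Updating two variables produces a `{q₁, q₂}`-variant. -/
theorem agree_update2 (s : V → M) (q₁ q₂ : V) (m₁ m₂ : M) :
    agreeOff {q₁, q₂} s (Function.update (Function.update s q₁ m₁) q₂ m₂) := by
  intro v hv
  simp only [Set.mem_insert_iff, Set.mem_singleton_iff, not_or] at hv
  rw [Function.update_of_ne hv.2, Function.update_of_ne hv.1]

theorem teamEquiv_image2 (q₁ q₂ : V) (a b : M) (Y : Set (V → M)) :
    TeamEquiv {q₁, q₂} Y
      ((fun s => Function.update (Function.update s q₁ a) q₂ b) '' Y) := by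
  constructor
  · intro s hs
    exact ⟨_, Set.mem_image_of_mem _ hs, agree_update2 s q₁ q₂ a b⟩
  · rintro _ ⟨s, hs, rfl⟩
    exact ⟨s, hs, agree_update2 s q₁ q₂ a b⟩

end Aux

/-- over models with at least two elements,
`ψ₁ ∨ ψ₂ ≡ ∃q₁ q₂ ((q₁ = q₂ ↪ ψ₁) ∧ (q₁ ≠ q₂ ↪ ψ₂))` for fresh `q₁, q₂`. -/
theorem or_via_hook {σ : Signature} {V M : Type} [DecidableEq V]
    (𝕄 : Struc σ M) (h2 : ∃ a b : M, a ≠ b)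
    (ψ₁ ψ₂ : TForm σ V) (q₁ q₂ : V) (hq : q₁ ≠ q₂)
    (hq₁ : q₁ ∉ ψ₁.vars ∪ ψ₂.vars) (hq₂ : q₂ ∉ ψ₁.vars ∪ ψ₂.vars)
    (X : Set (V → M)) :
    TTeamSat 𝕄 (ψ₁.or ψ₂) X ↔
      TTeamSat 𝕄 (.ex q₁ (.ex q₂
        ((hook (.eq q₁ q₂) ψ₁).and (hook (.neq q₁ q₂) ψ₂)))) X := by
  have hd₁ : Disjoint ψ₁.vars ({q₁, q₂} : Set V) := by
    rw [Set.disjoint_right]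
    intro v hv h
    simp only [Set.mem_insert_iff, Set.mem_singleton_iff] at hv
    rcases hv with rfl | rfl
    · exact hq₁ (Set.mem_union_left _ h)
    · exact hq₂ (Set.mem_union_left _ h)
  have hd₂ : Disjoint ψ₂.vars ({q₁, q₂} : Set V) := by
    rw [Set.disjoint_right]
    intro v hv h
    simp only [Set.mem_insert_iff, Set.mem_singleton_iff] at hv
    rcases hv with rfl | rfl
    · exact hq₁ (Set.mem_union_right _ h)
    · exact hq₂ (Set.mem_union_right _ h)
  simp only [TTeamSat, hook, Formula.neg, Formula.toT]
  constructor
  · rintro ⟨Y, Z, rfl, hY, hZ⟩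
    obtain ⟨a, b, hab⟩ := h2
    have hW : supplement (supplement (Y ∪ Z) (fun _ => ({a} : Set M)) q₁)
        (fun t => {m | (m = a ∧ ∃ s ∈ Y, Function.update s q₁ a = t) ∨
                       (m = b ∧ ∃ s ∈ Z, Function.update s q₁ a = t)}) q₂
      = (fun s => Function.update (Function.update s q₁ a) q₂ a) '' Y ∪
        (fun s => Function.update (Function.update s q₁ a) q₂ b) '' Z := by
      ext t
      constructor
      · rintro ⟨t', ⟨s, hs, m₁, hm₁, rfl⟩, m₂, hm₂, rfl⟩
        rw [show m₁ = a from hm₁] at hm₂ ⊢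
        rcases hm₂ with ⟨hma, s', hs', heq⟩ | ⟨hmb, s', hs', heq⟩
        · rw [show m₂ = a from hma]
          exact Or.inl ⟨s', hs', congrArg (fun u => Function.update u q₂ a) heq⟩
        · rw [show m₂ = b from hmb]
          exact Or.inr ⟨s', hs', congrArg (fun u => Function.update u q₂ b) heq⟩
      · rintro (⟨s, hs, rfl⟩ | ⟨s, hs, rfl⟩)
        · exact ⟨Function.update s q₁ a, ⟨s, Or.inl hs, a, rfl, rfl⟩,
            a, Or.inl ⟨rfl, s, hs, rfl⟩, rfl⟩
        · exact ⟨Function.update s q₁ a, ⟨s, Or.inr hs, a, rfl, rfl⟩,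
            b, Or.inr ⟨rfl, s, hs, rfl⟩, rfl⟩
    refine ⟨fun _ => {a}, fun s _ => ⟨a, rfl⟩,
      fun t => {m | (m = a ∧ ∃ s ∈ Y, Function.update s q₁ a = t) ∨
                    (m = b ∧ ∃ s ∈ Z, Function.update s q₁ a = t)}, ?_, ?_⟩
    · rintro t ⟨s, hs, m, hm, rfl⟩
      rw [show m = a from hm]
      rcases hs with hs | hs
      · exact ⟨a, Or.inl ⟨rfl, s, hs, rfl⟩⟩
      · exact ⟨b, Or.inr ⟨rfl, s, hs, rfl⟩⟩
    · rw [hW]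
      have hYψ : TTeamSat 𝕄 ψ₁
          ((fun s => Function.update (Function.update s q₁ a) q₂ a) '' Y) :=
        locality 𝕄 _ ψ₁ hd₁ Y _ (teamEquiv_image2 q₁ q₂ a a Y) hY
      have hZψ : TTeamSat 𝕄 ψ₂
          ((fun s => Function.update (Function.update s q₁ a) q₂ b) '' Z) :=
        locality 𝕄 _ ψ₂ hd₂ Z _ (teamEquiv_image2 q₁ q₂ a b Z) hZ
      have hfaeq : ∀ t ∈ (fun s => Function.update (Function.update s q₁ a) q₂ a) '' Y,
          t q₁ = t q₂ := by
        rintro _ ⟨s, hs, rfl⟩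
        show Function.update (Function.update s q₁ a) q₂ a q₁ =
          Function.update (Function.update s q₁ a) q₂ a q₂
        simp only [Function.update_self, Function.update_of_ne hq]
      have hfbneq : ∀ t ∈ (fun s => Function.update (Function.update s q₁ a) q₂ b) '' Z,
          t q₁ ≠ t q₂ := by
        rintro _ ⟨s, hs, rfl⟩
        show Function.update (Function.update s q₁ a) q₂ b q₁ ≠
          Function.update (Function.update s q₁ a) q₂ b q₂
        simp only [Function.update_self, Function.update_of_ne hq]
        exact hab
      exact ⟨⟨_, _, Set.union_comm _ _, hfbneq, hfaeq, hYψ⟩,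
             ⟨_, _, rfl, hfaeq, hfbneq, hZψ⟩⟩
  · rintro ⟨H₁, hne₁, H₂, hne₂, ⟨A, B, hW1, hA, hBeq, hB⟩, ⟨C, D, hW2, hC, hDneq, hD⟩⟩
    have hBW : B = {t ∈ supplement (supplement X H₁ q₁) H₂ q₂ | t q₁ = t q₂} := by
      apply Set.Subset.antisymm
      · intro t ht
        refine ⟨?_, hBeq t ht⟩
        rw [hW1]; exact Set.mem_union_right _ ht
      · rintro t ⟨htW, hteq⟩
        rw [hW1] at htW
        rcases htW with h | h
        · exact absurd hteq (hA t h)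
        · exact h
    have hDW : D = {t ∈ supplement (supplement X H₁ q₁) H₂ q₂ | t q₁ ≠ t q₂} := by
      apply Set.Subset.antisymm
      · intro t ht
        refine ⟨?_, hDneq t ht⟩
        rw [hW2]; exact Set.mem_union_right _ ht
      · rintro t ⟨htW, htneq⟩
        rw [hW2] at htW
        rcases htW with h | h
        · exact absurd (hC t h) htneq
        · exact h
    have key : ∀ s ∈ X, ∃ t ∈ supplement (supplement X H₁ q₁) H₂ q₂,
        agreeOff {q₁, q₂} s t := by
      intro s hs
      obtain ⟨m₁, hm₁⟩ := hne₁ s hs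
      have ht' : Function.update s q₁ m₁ ∈ supplement X H₁ q₁ := ⟨s, hs, m₁, hm₁, rfl⟩
      obtain ⟨m₂, hm₂⟩ := hne₂ _ ht'
      exact ⟨_, ⟨_, ht', m₂, hm₂, rfl⟩, agree_update2 s q₁ q₂ m₁ m₂⟩
    have hWsplit : ∀ t ∈ supplement (supplement X H₁ q₁) H₂ q₂, t ∈ B ∪ D := by
      intro t ht
      by_cases h : t q₁ = t q₂
      · left; rw [hBW]; exact ⟨ht, h⟩
      · right; rw [hDW]; exact ⟨ht, h⟩
    refine ⟨{s ∈ X | ∃ t ∈ B, agreeOff {q₁, q₂} s t},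
            {s ∈ X | ∃ t ∈ D, agreeOff {q₁, q₂} s t}, ?_, ?_, ?_⟩
    · ext s
      constructor
      · intro hs
        obtain ⟨t, htW, hag⟩ := key s hs
        rcases hWsplit t htW with h | h
        · exact Or.inl ⟨hs, t, h, hag⟩
        · exact Or.inr ⟨hs, t, h, hag⟩
      · rintro (⟨hs, _⟩ | ⟨hs, _⟩) <;> exact hs
    · refine locality 𝕄 {q₁, q₂} ψ₁ hd₁ B _ ⟨?_, ?_⟩ hB
      · intro t ht
        have htW : t ∈ supplement (supplement X H₁ q₁) H₂ q₂ := by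
          rw [hW1]; exact Set.mem_union_right _ ht
        obtain ⟨t', ⟨s, hs, m₁, hm₁, rfl⟩, m₂, hm₂, rfl⟩ := htW
        exact ⟨s, ⟨hs, _, ht, agree_update2 s q₁ q₂ m₁ m₂⟩,
          (agree_update2 s q₁ q₂ m₁ m₂).symm⟩
      · rintro s ⟨hs, t, htB, hag⟩
        exact ⟨t, htB, hag.symm⟩
    · refine locality 𝕄 {q₁, q₂} ψ₂ hd₂ D _ ⟨?_, ?_⟩ hD
      · intro t ht
        have htW : t ∈ supplement (supplement X H₁ q₁) H₂ q₂ := by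
          rw [hW2]; exact Set.mem_union_right _ ht
        obtain ⟨t', ⟨s, hs, m₁, hm₁, rfl⟩, m₂, hm₂, rfl⟩ := htW
        exact ⟨s, ⟨hs, _, ht, agree_update2 s q₁ q₂ m₁ m₂⟩,
          (agree_update2 s q₁ q₂ m₁ m₂).symm⟩
      · rintro s ⟨hs, t, htD, hag⟩
        exact ⟨t, htD, hag.symm⟩
end

section
/- For any first-order formula θ and any Team Semantics formula φ, M ⊨_X θ ↪ φ if and only if M ⊨_{X↾θ} φ, where θ ↪ φ is defined as (¬θ) ∨ (θ ∧ φ) with ¬θ the negation normal form of the negation of θ, and X↾θ = {s ∈ X : M ⊨_s θ}. -/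
lemma tarski_neg {σ : Signature} {V M : Type} [DecidableEq V] (𝕄 : Struc σ M)
    (θ : Formula σ V) : ∀ s : V → M, Tarski 𝕄 θ.neg s ↔ ¬ Tarski 𝕄 θ s := by
  induction θ with
  | rel r ts => intro s; simp [Formula.neg, Tarski]
  | nrel r ts => intro s; simp [Formula.neg, Tarski]
  | eq v w => intro s; simp [Formula.neg, Tarski]
  | neq v w => intro s; simp [Formula.neg, Tarski]
  | and φ ψ ih1 ih2 => intro s; simp [Formula.neg, Tarski, ih1, ih2]; tauto
  | or φ ψ ih1 ih2 => intro s; simp [Formula.neg, Tarski, ih1, ih2, not_or]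
  | ex v φ ih => intro s; simp [Formula.neg, Tarski, ih]
  | all v φ ih => intro s; simp [Formula.neg, Tarski, ih]

lemma flat {σ : Signature} {V M : Type} [DecidableEq V] (𝕄 : Struc σ M)
    (θ : Formula σ V) : ∀ X : Set (V → M),
    TTeamSat 𝕄 θ.toT X ↔ ∀ s ∈ X, Tarski 𝕄 θ s := by
  induction θ with
  | rel r ts => intro X; simp [Formula.toT, TTeamSat, Tarski]
  | nrel r ts => intro X; simp [Formula.toT, TTeamSat, Tarski]
  | eq v w => intro X; simp [Formula.toT, TTeamSat, Tarski]
  | neq v w => intro X; simp [Formula.toT, TTeamSat, Tarski]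
  | and φ ψ ih1 ih2 =>
    intro X
    simp only [Formula.toT, TTeamSat, Tarski, ih1, ih2]
    constructor
    · rintro ⟨h1, h2⟩ s hs; exact ⟨h1 s hs, h2 s hs⟩
    · intro h; exact ⟨fun s hs => (h s hs).1, fun s hs => (h s hs).2⟩
  | or φ ψ ih1 ih2 =>
    intro X
    simp only [Formula.toT, TTeamSat, Tarski]
    constructor
    · rintro ⟨Y, Z, rfl, hY, hZ⟩ s hs
      rcases hs with hs | hs
      · exact Or.inl ((ih1 Y).1 hY s hs)
      · exact Or.inr ((ih2 Z).1 hZ s hs)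
    · intro h
      refine ⟨{s ∈ X | Tarski 𝕄 φ s}, {s ∈ X | Tarski 𝕄 ψ s}, ?_, ?_, ?_⟩
      · ext s
        constructor
        · intro hs; rcases h s hs with h' | h'
          · exact Or.inl ⟨hs, h'⟩
          · exact Or.inr ⟨hs, h'⟩
        · rintro (⟨hs, _⟩ | ⟨hs, _⟩) <;> exact hs
      · exact (ih1 _).2 fun s hs => hs.2
      · exact (ih2 _).2 fun s hs => hs.2
  | ex v φ ih =>
    intro X
    simp only [Formula.toT, TTeamSat, Tarski]
    constructor
    · rintro ⟨H, hne, hsat⟩ s hs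
      obtain ⟨m, hm⟩ := hne s hs
      exact ⟨m, (ih _).1 hsat _ ⟨s, hs, m, hm, rfl⟩⟩
    · intro h
      refine ⟨fun s => {m | Tarski 𝕄 φ (Function.update s v m)}, fun s hs => h s hs, ?_⟩
      refine (ih _).2 ?_
      rintro t ⟨s, hs, m, hm, rfl⟩
      exact hm
  | all v φ ih =>
    intro X
    simp only [Formula.toT, TTeamSat, Tarski]
    constructor
    · intro h s hs m
      exact (ih _).1 h _ ⟨s, hs, m, rfl⟩
    · intro h
      refine (ih _).2 ?_
      rintro t ⟨s, hs, m, rfl⟩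
      exact h s hs m

/-- `M ⊨_X θ ↪ φ` iff `M ⊨_{X↾θ} φ`. -/
theorem hook_iff_restrict {σ : Signature} {V M : Type} [DecidableEq V]
    (𝕄 : Struc σ M) (θ : Formula σ V) (φ : TForm σ V) (X : Set (V → M)) :
    TTeamSat 𝕄 (hook θ φ) X ↔ TTeamSat 𝕄 φ (restrTeam 𝕄 X θ) := by
  simp only [hook, TTeamSat]
  constructor
  · rintro ⟨Y, Z, rfl, hY, hZ, hφ⟩
    have hY' := (flat 𝕄 θ.neg Y).1 hY
    have hZ' := (flat 𝕄 θ Z).1 hZ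
    have : restrTeam 𝕄 (Y ∪ Z) θ = Z := by
      ext s
      constructor
      · rintro ⟨hs | hs, hθ⟩
        · exact absurd hθ ((tarski_neg 𝕄 θ s).1 (hY' s hs))
        · exact hs
      · intro hs; exact ⟨Or.inr hs, hZ' s hs⟩
    rwa [this]
  · intro h
    refine ⟨{s ∈ X | ¬ Tarski 𝕄 θ s}, restrTeam 𝕄 X θ, ?_, ?_, ?_, h⟩
    · ext s
      constructor
      · intro hs
        by_cases hθ : Tarski 𝕄 θ s
        · exact Or.inr ⟨hs, hθ⟩
        · exact Or.inl ⟨hs, hθ⟩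
      · rintro (⟨hs, _⟩ | ⟨hs, _⟩) <;> exact hs
    · exact (flat 𝕄 θ.neg _).2 fun s hs => (tarski_neg 𝕄 θ s).2 hs.2
    · exact (flat 𝕄 θ _).2 fun s hs => hs.2
end

section
/- The non-constancy atom NC(v) is logically equivalent to ∀w (w ≠ v ↪ All(w)): for all models M with at least two elements and all teams X with v ∈ dom(X), the variable v takes at least two distinct values in X if and only if M ⊨_X ∀w (w ≠ v ↪ All(w)), where w is a fresh variable. -/
/-- The totality dependency `All`: the relation must be the whole domain. -/
def AllDep : Dep := ⟨1, fun M R => R = (Set.univ : Set (Fin 1 → M))⟩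

/-- `NC(v) ≡ ∀w (w ≠ v ↪ All(w))` over models with at least
two elements, for a fresh variable `w`. -/
theorem nonconstancy_via_totality {σ : Signature} {V M : Type} [DecidableEq V]
    (𝕄 : Struc σ M) (h2 : ∃ a b : M, a ≠ b) (v w : V) (hwv : w ≠ v)
    (X : Set (V → M)) :
    (∃ s ∈ X, ∃ s' ∈ X, s v ≠ s' v) ↔
      TTeamSat 𝕄 (.all w (hook (.neq w v) (.dep AllDep (fun _ => w)))) X := by
  classical
  have hvw : v ≠ w := Ne.symm hwv
  constructor
  · rintro ⟨s, hs, s', hs', hne⟩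
    show TTeamSat 𝕄 (hook (.neq w v) (.dep AllDep (fun _ => w))) (duplicate X w)
    refine ⟨{t ∈ duplicate X w | t w = t v}, {t ∈ duplicate X w | t w ≠ t v}, ?_, ?_, ?_, ?_⟩
    · ext t; by_cases h : t w = t v <;> simp [h]
    · intro t ht; exact ht.2
    · intro t ht; exact ht.2
    · show ((fun s => fun _ : Fin 1 => s w) '' {t ∈ duplicate X w | t w ≠ t v})
          = Set.univ
      ext f
      simp only [Set.mem_univ, iff_true, Set.mem_image]
      by_cases hc : s v = f 0
      · refine ⟨Function.update s' w (f 0), ⟨⟨s', hs', f 0, rfl⟩, ?_⟩, ?_⟩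
        · simp [Function.update_self, Function.update_of_ne hvw]
          rw [← hc]; exact hne
        · funext i; fin_cases i; simp
      · refine ⟨Function.update s w (f 0), ⟨⟨s, hs, f 0, rfl⟩, ?_⟩, ?_⟩
        · simp [Function.update_self, Function.update_of_ne hvw]
          exact fun h => hc h.symm
        · funext i; fin_cases i; simp
  · intro hsat
    obtain ⟨Y, Z, hYZ, hY, hZ1, hZ2⟩ := hsat
    have huniv : ((fun s => fun _ : Fin 1 => s w) '' Z) = Set.univ := hZ2
    by_contra hcon
    push_neg at hcon
    obtain ⟨a, b, hab⟩ := h2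
    have hz : ∀ m : M, ∃ t ∈ Z, t w = m := by
      intro m
      have : (fun _ : Fin 1 => m) ∈ ((fun s => fun _ : Fin 1 => s w) '' Z) := by
        rw [huniv]; trivial
      obtain ⟨t, htZ, ht⟩ := this
      exact ⟨t, htZ, congrFun ht 0⟩
    obtain ⟨t, htZ, htw⟩ := hz a
    have htdup : t ∈ duplicate X w := hYZ ▸ Set.mem_union_right Y htZ
    obtain ⟨s0, hs0, m0, hm0⟩ := htdup
    have hconst : ∀ s ∈ X, s v = s0 v := fun s hs => hcon s hs s0 hs0
    obtain ⟨t', ht'Z, ht'w⟩ := hz (s0 v)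
    have ht'dup : t' ∈ duplicate X w := hYZ ▸ Set.mem_union_right Y ht'Z
    obtain ⟨s1, hs1, m1, hm1⟩ := ht'dup
    have : t' v = s0 v := by
      rw [hm1, Function.update_of_ne hvw]; exact hconst s1 hs1
    exact hZ1 t' ht'Z (ht'w.trans this.symm)
end
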